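/- For any prime p, any j ≥ 1, and any positive integers k and m, the formal power series f_m^{p^j k} and f_{pm}^{p^{j−1} k} are congruent coefficientwise modulo p^j. -/

import Mathlib

/-- `f r = ∏_{k ≥ 1} (1 - q^(r k))` as a formal power series over ℤ.
The `n`-th coefficient is computed from the finite partial product
`∏_{k=1}^{n} (1 - q^(r k))`, which already has the correct coefficient of `q^n`. -/
noncomputable def f (r : ℕ) : PowerSeries ℤ :=
  PowerSeries.mk fun n =>
    PowerSeries.coeff n
      (∏ k ∈ Finset.range n, (1 - (PowerSeries.X : PowerSeries ℤ) ^ (r * (k + 1))))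

open PowerSeries Finset

/-- Divisibility by a constant in `ℤ⟦X⟧` is coefficientwise divisibility. -/
lemma C_dvd_iff_coeff (c : ℤ) (g : PowerSeries ℤ) :
    (PowerSeries.C c) ∣ g ↔ ∀ n, c ∣ PowerSeries.coeff n g := by
  constructor
  · rintro ⟨h, rfl⟩ n
    rw [PowerSeries.coeff_C_mul]
    exact Dvd.intro _ rfl
  · intro h
    refine ⟨PowerSeries.mk fun n => (h n).choose, ?_⟩
    ext n
    simp only [coeff_C_mul, coeff_mk]
    exact (h n).choose_spec

lemma coeff_f_eq (r n N : ℕ) (hr : 1 ≤ r) (hn : n ≤ N) :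
    PowerSeries.coeff n (f r) =
      PowerSeries.coeff n
        (∏ k ∈ Finset.range N, (1 - (PowerSeries.X : PowerSeries ℤ) ^ (r * (k + 1)))) := by
  have key : ∀ M, n ≤ M →
      PowerSeries.coeff n
        (∏ k ∈ Finset.range M, (1 - (PowerSeries.X : PowerSeries ℤ) ^ (r * (k + 1)))) =
      PowerSeries.coeff n
        (∏ k ∈ Finset.range n, (1 - (PowerSeries.X : PowerSeries ℤ) ^ (r * (k + 1)))) := by
    intro M hM
    induction M with
    | zero =>
      have hn0 : n = 0 := Nat.le_zero.mp hM
      subst hn0; rfl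
    | succ M ih =>
      rcases Nat.lt_or_ge n (M + 1) with h | h
      · have hnM : n ≤ M := by omega
        rw [Finset.prod_range_succ, mul_sub, mul_one, map_sub, ih hnM]
        have hz : PowerSeries.coeff n
            ((∏ k ∈ Finset.range M, (1 - (PowerSeries.X : PowerSeries ℤ) ^ (r * (k + 1)))) *
              PowerSeries.X ^ (r * (M + 1))) = 0 := by
          rw [PowerSeries.coeff_mul_X_pow']
          have : ¬ r * (M + 1) ≤ n := by nlinarith
          simp [this]
        rw [hz, sub_zero]
      · have : M + 1 = n := by omega
        rw [this]
  rw [key N hn]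
  simp [f, PowerSeries.coeff_mk]

/-- `X^(n+1)` divides the difference between `f r` and its partial product. -/
lemma X_pow_dvd_f_sub (r n : ℕ) (hr : 1 ≤ r) :
    (PowerSeries.X : PowerSeries ℤ) ^ (n + 1) ∣
      f r - ∏ k ∈ Finset.range (n + 1),
        (1 - (PowerSeries.X : PowerSeries ℤ) ^ (r * (k + 1))) := by
  rw [PowerSeries.X_pow_dvd_iff]
  intro i hi
  rw [map_sub, coeff_f_eq r i (n + 1) hr (by omega), sub_self]

lemma prod_sub_prod_dvd {R : Type*} [CommRing R] (c : R) (s : Finset ℕ)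
    (a b : ℕ → R) :
    (∀ i ∈ s, c ∣ a i - b i) → c ∣ (∏ i ∈ s, a i) - (∏ i ∈ s, b i) := by
  classical
  refine Finset.induction_on s (by simp) ?_
  intro j t hj ih h
  rw [Finset.prod_insert hj, Finset.prod_insert hj]
  have h1 : c ∣ a j - b j := h j (Finset.mem_insert_self _ _)
  have h2 : c ∣ (∏ i ∈ t, a i) - (∏ i ∈ t, b i) :=
    ih fun i hi => h i (Finset.mem_insert_of_mem hi)
  have key : a j * ∏ i ∈ t, a i - b j * ∏ i ∈ t, b i =
      a j * ((∏ i ∈ t, a i) - (∏ i ∈ t, b i)) + (a j - b j) * ∏ i ∈ t, b i := by ring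
  rw [key]
  exact dvd_add (Dvd.dvd.mul_left h2 _) (Dvd.dvd.mul_right h1 _)

/-- The basic Frobenius congruence for one factor. -/
lemma frobenius_factor (p s : ℕ) (hp : p.Prime) :
    (PowerSeries.C (p : ℤ)) ∣
      (1 - (PowerSeries.X : PowerSeries ℤ) ^ s) ^ p -
        (1 - (PowerSeries.X : PowerSeries ℤ) ^ (p * s)) := by
  haveI : Fact p.Prime := ⟨hp⟩
  haveI : CharP (PowerSeries (ZMod p)) p :=
    charP_of_injective_ringHom (PowerSeries.C_injective (R := ZMod p)) p
  rw [C_dvd_iff_coeff]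
  intro n
  rw [← ZMod.intCast_zmod_eq_zero_iff_dvd]
  have hzero : (PowerSeries.map (Int.castRingHom (ZMod p)))
      ((1 - (PowerSeries.X : PowerSeries ℤ) ^ s) ^ p -
        (1 - (PowerSeries.X : PowerSeries ℤ) ^ (p * s))) = 0 := by
    simp only [map_sub, map_pow, map_one, PowerSeries.map_X]
    rw [sub_pow_char (1 : PowerSeries (ZMod p)) ((PowerSeries.X : PowerSeries (ZMod p)) ^ s),
      one_pow, ← pow_mul, mul_comm s p]
    ring
  calc ((PowerSeries.coeff n
      ((1 - (PowerSeries.X : PowerSeries ℤ) ^ s) ^ p -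
        (1 - (PowerSeries.X : PowerSeries ℤ) ^ (p * s))) : ℤ) : ZMod p)
      = PowerSeries.coeff n
        ((PowerSeries.map (Int.castRingHom (ZMod p)))
          ((1 - (PowerSeries.X : PowerSeries ℤ) ^ s) ^ p -
            (1 - (PowerSeries.X : PowerSeries ℤ) ^ (p * s)))) := by
        rw [PowerSeries.coeff_map]; rfl
    _ = 0 := by rw [hzero, map_zero]

theorem f_pow_congr_mod_prime_pow (p j k m : ℕ) (hp : p.Prime) (hj : 1 ≤ j)
    (hk : 0 < k) (hm : 0 < m) :
    ∀ n : ℕ, (p : ℤ) ^ j ∣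
      PowerSeries.coeff n (f m ^ (p ^ j * k) - f (p * m) ^ (p ^ (j - 1) * k)) := by
  intro n
  set P : PowerSeries ℤ :=
    ∏ i ∈ Finset.range (n + 1), (1 - (PowerSeries.X : PowerSeries ℤ) ^ (m * (i + 1))) with hPdef
  set Q : PowerSeries ℤ :=
    ∏ i ∈ Finset.range (n + 1), (1 - (PowerSeries.X : PowerSeries ℤ) ^ (p * m * (i + 1)))
    with hQdef
  have hpm : 1 ≤ p * m := Nat.one_le_iff_ne_zero.mpr (Nat.mul_ne_zero hp.pos.ne' hm.ne')
  -- Step 1: replace f's by partial products in coefficient n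
  have hcoeff : PowerSeries.coeff n (f m ^ (p ^ j * k) - f (p * m) ^ (p ^ (j - 1) * k)) =
      PowerSeries.coeff n (P ^ (p ^ j * k) - Q ^ (p ^ (j - 1) * k)) := by
    have h1 : (PowerSeries.X : PowerSeries ℤ) ^ (n + 1) ∣
        f m ^ (p ^ j * k) - P ^ (p ^ j * k) :=
      dvd_trans (X_pow_dvd_f_sub m n hm) (sub_dvd_pow_sub_pow _ _ _)
    have h2 : (PowerSeries.X : PowerSeries ℤ) ^ (n + 1) ∣
        f (p * m) ^ (p ^ (j - 1) * k) - Q ^ (p ^ (j - 1) * k) :=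
      dvd_trans (X_pow_dvd_f_sub (p * m) n hpm) (sub_dvd_pow_sub_pow _ _ _)
    have h3 : (PowerSeries.X : PowerSeries ℤ) ^ (n + 1) ∣
        (f m ^ (p ^ j * k) - f (p * m) ^ (p ^ (j - 1) * k)) -
          (P ^ (p ^ j * k) - Q ^ (p ^ (j - 1) * k)) := by
      have : (f m ^ (p ^ j * k) - f (p * m) ^ (p ^ (j - 1) * k)) -
          (P ^ (p ^ j * k) - Q ^ (p ^ (j - 1) * k)) =
          (f m ^ (p ^ j * k) - P ^ (p ^ j * k)) -
            (f (p * m) ^ (p ^ (j - 1) * k) - Q ^ (p ^ (j - 1) * k)) := by ring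
      rw [this]
      exact dvd_sub h1 h2
    have h4 : PowerSeries.coeff n ((f m ^ (p ^ j * k) - f (p * m) ^ (p ^ (j - 1) * k)) -
        (P ^ (p ^ j * k) - Q ^ (p ^ (j - 1) * k))) = 0 := by
      rw [PowerSeries.X_pow_dvd_iff] at h3
      exact h3 n (by omega)
    rw [map_sub] at h4
    linarith
  rw [hcoeff]
  -- Step 2: ring-level divisibility for the partial products
  have hbase : (PowerSeries.C (p : ℤ)) ∣ P ^ p - Q := by
    rw [hPdef, hQdef, ← Finset.prod_pow]
    refine prod_sub_prod_dvd _ _ _ _ fun i _ => ?_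
    have := frobenius_factor p (m * (i + 1)) hp
    rwa [← mul_assoc] at this
  have hk' : (PowerSeries.C (p : ℤ)) ∣ (P ^ p) ^ k - Q ^ k :=
    dvd_trans hbase (sub_dvd_pow_sub_pow _ _ _)
  have hcast : ((p : ℕ) : PowerSeries ℤ) = PowerSeries.C (p : ℤ) := by
    simp
  have hlift : ((p : ℕ) : PowerSeries ℤ) ^ ((j - 1) + 1) ∣
      ((P ^ p) ^ k) ^ (p ^ (j - 1)) - (Q ^ k) ^ (p ^ (j - 1)) := by
    apply dvd_sub_pow_of_dvd_sub
    rw [hcast]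
    exact hk'
  have hj1 : (j - 1) + 1 = j := by omega
  rw [hj1] at hlift
  have he1 : ((P ^ p) ^ k) ^ (p ^ (j - 1)) = P ^ (p ^ j * k) := by
    rw [← pow_mul, ← pow_mul]
    congr 1
    have : p ^ j = p * p ^ (j - 1) := by
      conv_lhs => rw [← hj1]
      ring
    rw [this]; ring
  have he2 : (Q ^ k) ^ (p ^ (j - 1)) = Q ^ (p ^ (j - 1) * k) := by
    rw [← pow_mul, mul_comm]
  rw [he1, he2, hcast, ← map_pow] at hlift
  obtain ⟨h, hh⟩ := hlift
  rw [hh, PowerSeries.coeff_C_mul]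
  exact Dvd.intro _ rfl
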